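/- Let (b, B, m, μ) be an admissible parameter set and assume K is regular. Then for every u ∈ K there exists a unique pair (φ(·,u), ψ(·,u)) of continuously differentiable functions on [0,∞), with φ(·,u) taking values in [0,∞) and ψ(·,u) taking values in K, such that ∂φ/∂t(t,u) = F(ψ(t,u)), ∂ψ/∂t(t,u) = R(ψ(t,u)) for all t ≥ 0, φ(0,u) = 0 and ψ(0,u) = u. -/

import Mathlib

open MeasureTheory Filter
open scoped RealInnerProductSpace Topology ENNReal

noncomputable section

def IsSelfDualCone {H : Type*} [NormedAddCommGroup H] [InnerProductSpace ℝ H]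
    (K : Set H) : Prop :=
  K = {x : H | ∀ y ∈ K, 0 ≤ ⟪x, y⟫}

def trunc {H : Type*} [NormedAddCommGroup H] [InnerProductSpace ℝ H] (ξ : H) : H :=
  if ‖ξ‖ ≤ 1 then ξ else 0

structure AdmissibleParams (H : Type*) [NormedAddCommGroup H] [InnerProductSpace ℝ H]
    [CompleteSpace H] [MeasurableSpace H] [BorelSpace H] (K : Set H) where
  b : H
  B : H →L[ℝ] H
  m : Measure H
  ν : H → Measure H
  muVec : Set H → H
  m_support : m ((K \ {0})ᶜ) = 0
  m_sq : IntegrableOn (fun ξ : H => ‖ξ‖ ^ 2) (K \ {0}) m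
  m_chi : ∀ h : H, IntegrableOn (fun ξ : H => |⟪trunc ξ, h⟫|) (K \ {0}) m
  m_Im : ∃ Im : H, ∀ h : H, ⟪Im, h⟫ = ∫ ξ in K \ {0}, ⟪trunc ξ, h⟫ ∂m
  b_drift : ∀ v ∈ K, 0 ≤ ⟪b, v⟫ - ∫ ξ in K \ {0}, ⟪trunc ξ, v⟫ ∂m
  ν_finite : ∀ x ∈ K, IsFiniteMeasure (ν x)
  ν_support : ∀ x ∈ K, ν x ((K \ {0})ᶜ) = 0
  ν_add : ∀ x ∈ K, ∀ y ∈ K, ν (x + y) = ν x + ν y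
  ν_smul : ∀ x ∈ K, ∀ c : ℝ, 0 ≤ c → ν (c • x) = ENNReal.ofReal c • ν x
  ν_int : ∀ u ∈ K, ∀ x ∈ K, ⟪u, x⟫ = 0 →
    IntegrableOn (fun ξ : H => ⟪trunc ξ, u⟫ / ‖ξ‖ ^ 2) (K \ {0}) (ν x)
  B_quasi : ∀ u ∈ K, ∀ x ∈ K, ⟪u, x⟫ = 0 →
    0 ≤ ⟪ContinuousLinearMap.adjoint B u, x⟫
      - ∫ ξ in K \ {0}, ⟪trunc ξ, u⟫ / ‖ξ‖ ^ 2 ∂(ν x)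
  muVec_mem : ∀ S : Set H, MeasurableSet S → muVec S ∈ K
  muVec_spec : ∀ S : Set H, MeasurableSet S → ∀ x ∈ K, ⟪muVec S, x⟫ = (ν x S).toReal

def IsRegularCone {H : Type*} [NormedAddCommGroup H] [InnerProductSpace ℝ H]
    (K : Set H) : Prop :=
  ∀ (y : H) (x : ℕ → H), y ∈ K → (∀ n, x n ∈ K) →
    (∀ n, x (n + 1) - x n ∈ K) → (∀ n, y - x n ∈ K) →
    ∃ l : H, Filter.Tendsto x Filter.atTop (nhds l)

namespace Stmt7Aux

/-! ### Scalar lemmas -/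

lemma exp_upper {s t : ℝ} (h0 : 0 ≤ s) (hst : s ≤ t) :
    Real.exp (-s) - Real.exp (-t) ≤ t - s := by
  have h1 : Real.exp (-t) = Real.exp (-s) * Real.exp (-(t - s)) := by
    rw [← Real.exp_add]; ring_nf
  have h2 : Real.exp (-s) ≤ 1 := Real.exp_le_one_iff.2 (by linarith)
  have h3 : (-(t - s)) + 1 ≤ Real.exp (-(t - s)) := Real.add_one_le_exp _
  have h4 : (0:ℝ) < Real.exp (-s) := Real.exp_pos _
  nlinarith [Real.exp_pos (-(t-s))]

lemma exp_lower {s t : ℝ} (h0 : 0 ≤ s) (hst : s ≤ t) :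
    (t - s) * (1 - t) ≤ Real.exp (-s) - Real.exp (-t) := by
  have h1 : Real.exp (-s) = Real.exp (-t) * Real.exp (t - s) := by
    rw [← Real.exp_add]; ring_nf
  have h2 : (t - s) + 1 ≤ Real.exp (t - s) := Real.add_one_le_exp _
  have h3 : (-t) + 1 ≤ Real.exp (-t) := Real.add_one_le_exp _
  have h4 : (0:ℝ) < Real.exp (-t) := Real.exp_pos _
  nlinarith

lemma exp_mono {s t : ℝ} (hst : s ≤ t) : 0 ≤ Real.exp (-s) - Real.exp (-t) := by
  have := Real.exp_le_exp.2 (neg_le_neg hst)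
  linarith

/-- `|G t - G s| ≤ min t 1 * (t-s)` where `G x = exp(-x) - 1 + x`. -/
lemma gdiff_bound {s t : ℝ} (h0 : 0 ≤ s) (hst : s ≤ t) :
    |(Real.exp (-t) - 1 + t) - (Real.exp (-s) - 1 + s)| ≤ min t 1 * (t - s) := by
  have h1 := exp_upper h0 hst
  have h2 := exp_lower h0 hst
  have h3 := exp_mono hst
  rw [abs_le]
  constructor
  · rcases min_cases t 1 with ⟨hm, _⟩ | ⟨hm, _⟩ <;> rw [hm] <;> nlinarith
  · rcases min_cases t 1 with ⟨hm, _⟩ | ⟨hm, _⟩ <;> rw [hm] <;> nlinarith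

/-! ### Cone basics -/

variable {H : Type*} [NormedAddCommGroup H] [InnerProductSpace ℝ H] [CompleteSpace H]
  {K : Set H}

lemma mem_iff (hK : IsSelfDualCone K) {x : H} : x ∈ K ↔ ∀ y ∈ K, 0 ≤ ⟪x, y⟫ := by
  conv_lhs => rw [hK]
  rfl

lemma inner_nonneg (hK : IsSelfDualCone K) {x y : H} (hx : x ∈ K) (hy : y ∈ K) :
    0 ≤ ⟪x, y⟫ := (mem_iff hK).1 hx y hy

lemma zero_mem (hK : IsSelfDualCone K) : (0:H) ∈ K :=
  (mem_iff hK).2 fun y _ => by simp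

lemma add_mem (hK : IsSelfDualCone K) {x y : H} (hx : x ∈ K) (hy : y ∈ K) : x + y ∈ K :=
  (mem_iff hK).2 fun z hz => by
    rw [inner_add_left]
    exact add_nonneg (inner_nonneg hK hx hz) (inner_nonneg hK hy hz)

lemma smul_mem (hK : IsSelfDualCone K) {x : H} {c : ℝ} (hc : 0 ≤ c) (hx : x ∈ K) :
    c • x ∈ K :=
  (mem_iff hK).2 fun z hz => by
    rw [real_inner_smul_left]
    exact mul_nonneg hc (inner_nonneg hK hx hz)

lemma isClosed (hK : IsSelfDualCone K) : IsClosed K := by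
  have : K = ⋂ y ∈ K, {x : H | 0 ≤ ⟪x, y⟫} := by
    conv_lhs => rw [hK]
    ext x; simp
  rw [this]
  exact isClosed_biInter fun y _ =>
    isClosed_le continuous_const (continuous_id.inner continuous_const)

lemma convex (hK : IsSelfDualCone K) : Convex ℝ K := fun x hx y hy a b ha hb _ =>
  add_mem hK (smul_mem hK ha hx) (smul_mem hK hb hy)

lemma norm_mono (hK : IsSelfDualCone K) {x y : H} (hx : x ∈ K) (hxy : y - x ∈ K) :
    ‖x‖ ≤ ‖y‖ := by
  have h1 : 0 ≤ ⟪x, y - x⟫ := inner_nonneg hK hx hxy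
  have h2 : ‖y‖^2 = ‖x‖^2 + 2 * ⟪x, y - x⟫ + ‖y - x‖^2 := by
    have hy' : ‖y‖^2 = ‖x + (y - x)‖^2 := by rw [add_sub_cancel]
    rw [hy', norm_add_sq_real]
  nlinarith [norm_nonneg x, norm_nonneg y, sq_nonneg (‖y - x‖)]

/-- Projection onto a closed convex nonempty set exists, with variational characterization. -/
lemma exists_proj (hcl : IsClosed K) (hconv : Convex ℝ K) (hne : K.Nonempty) (z : H) :
    ∃ p ∈ K, ∀ w ∈ K, ⟪z - p, w - p⟫ ≤ 0 := by
  obtain ⟨p, hp, hmin⟩ :=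
    exists_norm_eq_iInf_of_complete_convex hne hcl.isComplete hconv z
  exact ⟨p, hp, (norm_eq_iInf_iff_real_inner_le_zero hconv hp).1 hmin⟩

end Stmt7Aux

namespace Stmt7Aux
variable {H : Type*} [NormedAddCommGroup H] [InnerProductSpace ℝ H] [CompleteSpace H]
  {K : Set H} {P : H → H}

section Proj
variable (hK : IsSelfDualCone K) (hPmem : ∀ z, P z ∈ K)
  (hPchar : ∀ z, ∀ w ∈ K, ⟪z - P z, w - P z⟫ ≤ 0)

include hPmem hPchar

lemma proj_fix {z : H} (hz : z ∈ K) : P z = z := by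
  have h0 : ⟪z - P z, z - P z⟫ ≤ 0 := hPchar z z hz
  have h1 : z - P z = 0 := by
    have := re_inner_self_nonpos (𝕜 := ℝ) (x := z - P z)
    simp only [RCLike.re_to_real] at this
    exact this.1 h0
  have := sub_eq_zero.1 h1
  exact this.symm

include hK in
lemma proj_qmem (z : H) : P z - z ∈ K := by
  refine (mem_iff hK).2 fun k hk => ?_
  have h := hPchar z (P z + k) (add_mem hK (hPmem z) hk)
  rw [add_sub_cancel_left] at h
  have : ⟪P z - z, k⟫ = -⟪z - P z, k⟫ := by
    rw [← inner_neg_left]; congr 1; abel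
  rw [this]; linarith

include hK in
lemma proj_orth (z : H) : ⟪P z, P z - z⟫ = 0 := by
  have h1 : ⟪z - P z, (0:H) - P z⟫ ≤ 0 := hPchar z 0 (zero_mem hK)
  have h2 : ⟪z - P z, ((2:ℝ) • P z) - P z⟫ ≤ 0 :=
    hPchar z ((2:ℝ) • P z) (smul_mem hK (by norm_num) (hPmem z))
  have e1 : ⟪z - P z, (0:H) - P z⟫ = -⟪z - P z, P z⟫ := by
    rw [zero_sub, inner_neg_right]
  have e2 : ((2:ℝ) • P z) - P z = P z := by
    rw [two_smul]; abel
  rw [e2] at h2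
  rw [e1] at h1
  have h3 : ⟪z - P z, P z⟫ = 0 := le_antisymm h2 (by linarith)
  have : ⟪P z, P z - z⟫ = -⟪z - P z, P z⟫ := by
    rw [real_inner_comm, ← inner_neg_left]; congr 1; abel
  rw [this, h3, neg_zero]

include hK in
lemma proj_norm_sq (z : H) : ‖z‖^2 = ‖P z‖^2 + ‖P z - z‖^2 := by
  have horth := proj_orth hK hPmem hPchar z
  have hz : z = P z - (P z - z) := by abel
  have : ‖z‖^2 = ‖P z - (P z - z)‖^2 := by rw [← hz]
  rw [this, norm_sub_sq_real, horth]
  ring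

lemma proj_nearest (z : H) {k : H} (hk : k ∈ K) : ‖P z - z‖ ≤ ‖k - z‖ := by
  have h1 : ⟪z - P z, k - P z⟫ ≤ 0 := hPchar z k hk
  have h2 : ‖k - z‖^2 = ‖k - P z‖^2 + 2*⟪k - P z, P z - z⟫ + ‖P z - z‖^2 := by
    have he : k - z = (k - P z) + (P z - z) := by abel
    rw [he, norm_add_sq_real]
  have h3 : ⟪k - P z, P z - z⟫ = -⟪z - P z, k - P z⟫ := by
    rw [real_inner_comm, ← inner_neg_left]; congr 1; abel
  nlinarith [norm_nonneg (k - z), norm_nonneg (P z - z), sq_nonneg (‖k - P z‖)]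

lemma proj_lip (z₁ z₂ : H) : ‖P z₁ - P z₂‖ ≤ ‖z₁ - z₂‖ := by
  have c1 : ⟪z₁ - P z₁, P z₂ - P z₁⟫ ≤ 0 := hPchar z₁ _ (hPmem z₂)
  have c2 : ⟪z₂ - P z₂, P z₁ - P z₂⟫ ≤ 0 := hPchar z₂ _ (hPmem z₁)
  have key : ‖P z₁ - P z₂‖^2 ≤ ⟪z₁ - z₂, P z₁ - P z₂⟫ := by
    have e1 : ⟪z₁ - P z₁, P z₂ - P z₁⟫ = -⟪z₁ - P z₁, P z₁ - P z₂⟫ := by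
      rw [← inner_neg_right]; congr 1; abel
    have e2 : ⟪z₂ - P z₂, P z₁ - P z₂⟫ = ⟪z₂ - P z₂, P z₁ - P z₂⟫ := rfl
    have h4 : ⟪(z₁ - z₂) - (P z₁ - P z₂), P z₁ - P z₂⟫ ≥ 0 := by
      have : (z₁ - z₂) - (P z₁ - P z₂) = (z₁ - P z₁) - (z₂ - P z₂) := by abel
      rw [this, inner_sub_left]
      rw [e1] at c1
      linarith
    rw [inner_sub_left, real_inner_self_eq_norm_sq] at h4
    linarith
  have cs := real_inner_le_norm (z₁ - z₂) (P z₁ - P z₂)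
  nlinarith [norm_nonneg (P z₁ - P z₂), norm_nonneg (z₁ - z₂)]

include hK in
/-- If all pairings of `z` with elements of `K` are bounded by `D‖x‖`, then `‖z‖ ≤ 2D`. -/
lemma norm_le_of_pairings {z : H} {D : ℝ} (hD : 0 ≤ D)
    (h : ∀ x ∈ K, |⟪z, x⟫| ≤ D * ‖x‖) : ‖z‖ ≤ 2 * D := by
  set p := P z with hp
  set q := P z - z with hq
  have hzpq : z = p - q := by rw [hp, hq]; abel
  have hqK : q ∈ K := proj_qmem hK hPmem hPchar z
  have hnn := proj_norm_sq hK hPmem hPchar z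
  have hpz : ‖p‖ ≤ ‖z‖ := by nlinarith [norm_nonneg p, norm_nonneg z, sq_nonneg ‖q‖]
  have hqz : ‖q‖ ≤ ‖z‖ := by nlinarith [norm_nonneg q, norm_nonneg z, sq_nonneg ‖p‖]
  have h1 : ‖z‖^2 = ⟪z, p⟫ - ⟪z, q⟫ := by
    rw [← real_inner_self_eq_norm_sq]
    nth_rewrite 2 [hzpq]
    rw [inner_sub_right]
  have h2 : ‖z‖^2 ≤ D * ‖p‖ + D * ‖q‖ := by
    have a1 := h p (hPmem z)
    have a2 := h q hqK
    have := abs_le.1 a1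
    have := abs_le.1 a2
    rw [h1]
    cases abs_le.1 a1; cases abs_le.1 a2
    linarith
  have h3 : ‖z‖^2 ≤ 2 * D * ‖z‖ := by nlinarith
  rcases eq_or_lt_of_le (norm_nonneg z) with hz0 | hz0
  · rw [← hz0]; positivity
  · nlinarith

end Proj
end Stmt7Aux

namespace Stmt7Aux
variable {H : Type*} [NormedAddCommGroup H] [InnerProductSpace ℝ H] [CompleteSpace H]
  {K : Set H}

/-- The integrand of the Riccati operators. -/
def gfun (u ξ : H) : ℝ := Real.exp (-⟪ξ, u⟫) - 1 + ⟪trunc ξ, u⟫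

lemma gfun_def (u ξ : H) : gfun u ξ = Real.exp (-⟪ξ, u⟫) - 1 + ⟪trunc ξ, u⟫ := rfl

lemma measurable_trunc [MeasurableSpace H] [BorelSpace H] : Measurable (trunc : H → H) := by
  unfold trunc
  exact Measurable.ite (isClosed_le continuous_norm continuous_const).measurableSet
    measurable_id measurable_const

lemma gfun_measurable [MeasurableSpace H] [BorelSpace H] (u : H) :
    Measurable (fun ξ => gfun u ξ) := by
  apply Measurable.add
  · apply Measurable.sub
    · exact (Real.continuous_exp.measurable).comp
        ((continuous_id.inner (continuous_const (y := u))).measurable.neg)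
    · exact measurable_const
  · exact (continuous_id.inner (continuous_const (y := u))).measurable.comp measurable_trunc

lemma gfun_diff_le (hK : IsSelfDualCone K) {u v ξ : H} (hu : u ∈ K) (hv : v ∈ K)
    (hξ : ξ ∈ K) {r : ℝ} (hur : ‖u‖ ≤ r) (hvr : ‖v‖ ≤ r)
    (huv : ⟪ξ, u⟫ ≤ ⟪ξ, v⟫) :
    |gfun u ξ - gfun v ξ| ≤ max r 1 * ‖ξ‖^2 * ‖u - v‖ := by
  set s := ⟪ξ, u⟫ with hs
  set t := ⟪ξ, v⟫ with ht
  have hs0 : 0 ≤ s := inner_nonneg hK hξ hu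
  have ht0 : 0 ≤ t := inner_nonneg hK hξ hv
  have hts : t - s = ⟪ξ, v - u⟫ := by rw [inner_sub_right]
  have hts' : t - s ≤ ‖ξ‖ * ‖u - v‖ := by
    rw [hts]
    calc ⟪ξ, v - u⟫ ≤ ‖ξ‖ * ‖v - u‖ := real_inner_le_norm ξ (v - u)
    _ = ‖ξ‖ * ‖u - v‖ := by rw [norm_sub_rev]
  have hξ0 : (0:ℝ) ≤ ‖ξ‖ := norm_nonneg ξ
  have huv0 : (0:ℝ) ≤ ‖u - v‖ := norm_nonneg _
  have hmax1 : (1:ℝ) ≤ max r 1 := le_max_right r 1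
  by_cases hle : ‖ξ‖ ≤ 1
  · have htr : trunc ξ = ξ := if_pos hle
    have hg : gfun u ξ - gfun v ξ = (Real.exp (-s) - 1 + s) - (Real.exp (-t) - 1 + t) := by
      rw [gfun_def, gfun_def, htr, ← hs, ← ht]
    rw [hg, abs_sub_comm]
    have key := gdiff_bound hs0 huv
    have hmin1 : min t 1 ≤ max r 1 * ‖ξ‖ := by
      have h1 : t ≤ ‖ξ‖ * r := by
        calc t ≤ ‖ξ‖ * ‖v‖ := real_inner_le_norm ξ v
        _ ≤ ‖ξ‖ * r := by nlinarith
      have h2 : min t 1 ≤ t := min_le_left _ _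
      have h3 : ‖ξ‖ * r ≤ max r 1 * ‖ξ‖ := by
        have : r ≤ max r 1 := le_max_left r 1
        nlinarith
      linarith
    have hmin0 : 0 ≤ min t 1 := le_min ht0 (by norm_num)
    calc |(Real.exp (-t) - 1 + t) - (Real.exp (-s) - 1 + s)| ≤ min t 1 * (t - s) := key
    _ ≤ (max r 1 * ‖ξ‖) * (‖ξ‖ * ‖u - v‖) := by
        apply mul_le_mul hmin1 hts' (by linarith) (by positivity)
    _ = max r 1 * ‖ξ‖^2 * ‖u - v‖ := by ring
  · push_neg at hle
    have htr : trunc ξ = 0 := if_neg (not_le.2 hle)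
    have hg : gfun u ξ - gfun v ξ = Real.exp (-s) - Real.exp (-t) := by
      rw [gfun_def, gfun_def, htr, ← hs, ← ht]
      simp
    rw [hg, abs_of_nonneg (exp_mono huv)]
    have h1 := exp_upper hs0 huv
    have h2 : ‖ξ‖ ≤ ‖ξ‖^2 := by nlinarith
    calc Real.exp (-s) - Real.exp (-t) ≤ t - s := h1
    _ ≤ ‖ξ‖ * ‖u - v‖ := hts'
    _ ≤ max r 1 * ‖ξ‖^2 * ‖u - v‖ := by
        have e1 : ‖ξ‖ * ‖u - v‖ ≤ ‖ξ‖^2 * ‖u - v‖ := mul_le_mul_of_nonneg_right h2 huv0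
        have e2 : ‖ξ‖^2 * ‖u - v‖ ≤ max r 1 * (‖ξ‖^2 * ‖u - v‖) :=
          le_mul_of_one_le_left (by positivity) hmax1
        nlinarith

lemma gfun_diff_bound (hK : IsSelfDualCone K) {u v ξ : H} (hu : u ∈ K) (hv : v ∈ K)
    (hξ : ξ ∈ K) {r : ℝ} (hur : ‖u‖ ≤ r) (hvr : ‖v‖ ≤ r) :
    |gfun u ξ - gfun v ξ| ≤ max r 1 * ‖ξ‖^2 * ‖u - v‖ := by
  rcases le_total ⟪ξ, u⟫ ⟪ξ, v⟫ with h | h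
  · exact gfun_diff_le hK hu hv hξ hur hvr h
  · rw [abs_sub_comm, norm_sub_rev u v]
    exact gfun_diff_le hK hv hu hξ hvr hur h

lemma gfun_zero (ξ : H) : gfun 0 ξ = 0 := by
  simp [gfun_def]

lemma gfun_abs_bound (hK : IsSelfDualCone K) {u ξ : H} (hu : u ∈ K) (hξ : ξ ∈ K)
    {r : ℝ} (hur : ‖u‖ ≤ r) :
    |gfun u ξ| ≤ max r 1 * ‖ξ‖^2 * r := by
  have := gfun_diff_bound hK hu (zero_mem hK) hξ hur (by simpa using (le_trans (norm_nonneg u) hur))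
  rw [gfun_zero, sub_zero, sub_zero] at this
  calc |gfun u ξ| ≤ max r 1 * ‖ξ‖^2 * ‖u‖ := this
  _ ≤ max r 1 * ‖ξ‖^2 * r := by
      have h1 : (0:ℝ) ≤ max r 1 * ‖ξ‖^2 := by positivity
      nlinarith [mul_le_mul_of_nonneg_left hur h1]

lemma gfun_le_trunc (hK : IsSelfDualCone K) {u ξ : H} (hu : u ∈ K) (hξ : ξ ∈ K) :
    gfun u ξ ≤ ⟪trunc ξ, u⟫ := by
  rw [gfun_def]
  have : Real.exp (-⟪ξ, u⟫) ≤ 1 :=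
    Real.exp_le_one_iff.2 (neg_nonpos.2 (inner_nonneg hK hξ hu))
  linarith

lemma gfun_ge (hK : IsSelfDualCone K) {u ξ : H} (hu : u ∈ K) (hξ : ξ ∈ K) :
    -(‖ξ‖^2) ≤ gfun u ξ := by
  have hs0 : 0 ≤ ⟪ξ, u⟫ := inner_nonneg hK hξ hu
  by_cases hle : ‖ξ‖ ≤ 1
  · have htr : trunc ξ = ξ := if_pos hle
    rw [gfun_def, htr]
    have : -⟪ξ, u⟫ + 1 ≤ Real.exp (-⟪ξ, u⟫) := Real.add_one_le_exp _
    nlinarith [sq_nonneg ‖ξ‖]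
  · push_neg at hle
    have htr : trunc ξ = 0 := if_neg (not_le.2 hle)
    rw [gfun_def, htr]
    have h1 : (0:ℝ) < Real.exp (-⟪ξ, u⟫) := Real.exp_pos _
    have h2 : (1:ℝ) ≤ ‖ξ‖^2 := by nlinarith
    simp only [inner_zero_left]
    linarith

end Stmt7Aux

namespace Stmt7Aux
open ContinuousLinearMap
variable {H : Type*} [NormedAddCommGroup H] [InnerProductSpace ℝ H] [CompleteSpace H]
  [MeasurableSpace H] [BorelSpace H] {K : Set H}

section Params
variable (hK : IsSelfDualCone K) (p : AdmissibleParams H K)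

lemma measurable_gdiv (u : H) : Measurable (fun ξ => gfun u ξ / ‖ξ‖^2) :=
  (gfun_measurable u).div ((continuous_norm.pow 2).measurable)

include hK

lemma gdiv_bound {u ξ : H} (hu : u ∈ K) (hξK : ξ ∈ K) (hξ0 : ξ ≠ 0) {r : ℝ}
    (hur : ‖u‖ ≤ r) : |gfun u ξ / ‖ξ‖^2| ≤ max r 1 * r := by
  have hξn : ‖ξ‖ ≠ 0 := norm_ne_zero_iff.2 hξ0
  have hn : (0:ℝ) < ‖ξ‖^2 := by positivity
  rw [abs_div, abs_of_pos hn, div_le_iff₀ hn]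
  calc |gfun u ξ| ≤ max r 1 * ‖ξ‖^2 * r := gfun_abs_bound hK hu hξK hur
  _ = max r 1 * r * ‖ξ‖^2 := by ring

lemma meas_Kd : MeasurableSet (K \ {0}) :=
  ((isClosed hK).measurableSet).diff (measurableSet_singleton 0)

include p

lemma int_g_m {u : H} (hu : u ∈ K) :
    IntegrableOn (fun ξ => gfun u ξ) (K \ {0}) p.m := by
  apply Integrable.mono' ((p.m_sq.const_mul (max ‖u‖ 1 * ‖u‖)))
    (gfun_measurable u).aestronglyMeasurable
  filter_upwards [ae_restrict_mem (meas_Kd hK)] with ξ hξ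
  rw [Real.norm_eq_abs]
  calc |gfun u ξ| ≤ max ‖u‖ 1 * ‖ξ‖^2 * ‖u‖ := gfun_abs_bound hK hu hξ.1 le_rfl
  _ = max ‖u‖ 1 * ‖u‖ * ‖ξ‖^2 := by ring

lemma int_trunc_m (u : H) :
    IntegrableOn (fun ξ => ⟪trunc ξ, u⟫) (K \ {0}) p.m := by
  have hmeas : Measurable (fun ξ : H => ⟪trunc ξ, u⟫) :=
    ((continuous_id.inner (continuous_const (y := u))).measurable).comp measurable_trunc
  apply Integrable.mono' (p.m_chi u) hmeas.aestronglyMeasurable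
  filter_upwards with ξ
  rw [Real.norm_eq_abs]

lemma F_nonneg {u : H} (hu : u ∈ K) :
    0 ≤ ⟪p.b, u⟫ - ∫ ξ in K \ {0}, gfun u ξ ∂p.m := by
  have hg := int_g_m hK p hu
  have ht := int_trunc_m hK p u
  have hsplit : ∫ ξ in K \ {0}, gfun u ξ ∂p.m
      = (∫ ξ in K \ {0}, ⟪trunc ξ, u⟫ ∂p.m)
        - ∫ ξ in K \ {0}, (⟪trunc ξ, u⟫ - gfun u ξ) ∂p.m := by
    have hdiff : IntegrableOn (fun ξ => ⟪trunc ξ, u⟫ - gfun u ξ) (K \ {0}) p.m :=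
      ht.sub hg
    rw [← integral_sub ht hdiff]
    congr 1; ext ξ; ring
  have hpos : 0 ≤ ∫ ξ in K \ {0}, (⟪trunc ξ, u⟫ - gfun u ξ) ∂p.m := by
    apply setIntegral_nonneg (meas_Kd hK)
    intro ξ hξ
    have := gfun_le_trunc hK hu hξ.1
    linarith
  have := p.b_drift u hu
  rw [hsplit]
  linarith

lemma F_lip {u v : H} (hu : u ∈ K) (hv : v ∈ K) {r : ℝ}
    (hur : ‖u‖ ≤ r) (hvr : ‖v‖ ≤ r) :
    |(⟪p.b, u⟫ - ∫ ξ in K \ {0}, gfun u ξ ∂p.m)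
      - (⟪p.b, v⟫ - ∫ ξ in K \ {0}, gfun v ξ ∂p.m)|
      ≤ (‖p.b‖ + max r 1 * ∫ ξ in K \ {0}, ‖ξ‖^2 ∂p.m) * ‖u - v‖ := by
  have hg_u := int_g_m hK p hu
  have hg_v := int_g_m hK p hv
  have h1 : |⟪p.b, u⟫ - ⟪p.b, v⟫| ≤ ‖p.b‖ * ‖u - v‖ := by
    rw [← inner_sub_right]
    exact abs_real_inner_le_norm p.b (u - v)
  have h2 : |(∫ ξ in K \ {0}, gfun u ξ ∂p.m) - ∫ ξ in K \ {0}, gfun v ξ ∂p.m|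
      ≤ max r 1 * (∫ ξ in K \ {0}, ‖ξ‖^2 ∂p.m) * ‖u - v‖ := by
    rw [← integral_sub hg_u hg_v]
    calc |∫ ξ in K \ {0}, (gfun u ξ - gfun v ξ) ∂p.m|
        ≤ ∫ ξ in K \ {0}, |gfun u ξ - gfun v ξ| ∂p.m := by
          simpa [Real.norm_eq_abs] using
            norm_integral_le_integral_norm (μ := p.m.restrict (K \ {0}))
              (fun ξ => gfun u ξ - gfun v ξ)
      _ ≤ ∫ ξ in K \ {0}, (max r 1 * ‖u - v‖) * ‖ξ‖^2 ∂p.m := by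
          apply integral_mono_ae ((hg_u.sub hg_v).abs) (p.m_sq.const_mul _)
          filter_upwards [ae_restrict_mem (meas_Kd hK)] with ξ hξ
          calc |gfun u ξ - gfun v ξ| ≤ max r 1 * ‖ξ‖^2 * ‖u - v‖ :=
                gfun_diff_bound hK hu hv hξ.1 hur hvr
          _ = (max r 1 * ‖u - v‖) * ‖ξ‖^2 := by ring
      _ = max r 1 * (∫ ξ in K \ {0}, ‖ξ‖^2 ∂p.m) * ‖u - v‖ := by
          rw [integral_const_mul]; ring
  calc |(⟪p.b, u⟫ - ∫ ξ in K \ {0}, gfun u ξ ∂p.m)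
      - (⟪p.b, v⟫ - ∫ ξ in K \ {0}, gfun v ξ ∂p.m)|
      = |(⟪p.b, u⟫ - ⟪p.b, v⟫)
        - ((∫ ξ in K \ {0}, gfun u ξ ∂p.m) - ∫ ξ in K \ {0}, gfun v ξ ∂p.m)| := by
        congr 1; ring
    _ ≤ |⟪p.b, u⟫ - ⟪p.b, v⟫|
        + |(∫ ξ in K \ {0}, gfun u ξ ∂p.m) - ∫ ξ in K \ {0}, gfun v ξ ∂p.m| :=
        abs_sub _ _
    _ ≤ ‖p.b‖ * ‖u - v‖ + max r 1 * (∫ ξ in K \ {0}, ‖ξ‖^2 ∂p.m) * ‖u - v‖ := by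
        exact add_le_add h1 h2
    _ = (‖p.b‖ + max r 1 * ∫ ξ in K \ {0}, ‖ξ‖^2 ∂p.m) * ‖u - v‖ := by ring

lemma int_gdiv_ν {u x : H} (hu : u ∈ K) (hx : x ∈ K) :
    IntegrableOn (fun ξ => gfun u ξ / ‖ξ‖^2) (K \ {0}) (p.ν x) := by
  haveI := p.ν_finite x hx
  apply Integrable.mono' (integrable_const (max ‖u‖ 1 * ‖u‖))
    (measurable_gdiv u).aestronglyMeasurable
  filter_upwards [ae_restrict_mem (meas_Kd hK)] with ξ hξ
  rw [Real.norm_eq_abs]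
  exact gdiv_bound hK hu hξ.1 hξ.2 le_rfl

end Params
end Stmt7Aux

namespace Stmt7Aux
open ContinuousLinearMap
variable {H : Type*} [NormedAddCommGroup H] [InnerProductSpace ℝ H] [CompleteSpace H]
  [MeasurableSpace H] [BorelSpace H] {K : Set H}

section ROps
variable (hK : IsSelfDualCone K) (p : AdmissibleParams H K) {R : H → H}
  (hR : ∀ u ∈ K, ∀ x ∈ K, ⟪R u, x⟫ =
      ⟪ContinuousLinearMap.adjoint p.B u, x⟫
        - ∫ ξ in K \ {0}, (Real.exp (-⟪ξ, u⟫) - 1 + ⟪trunc ξ, u⟫) / ‖ξ‖ ^ 2 ∂(p.ν x))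

include hR

lemma Rpair {u x : H} (hu : u ∈ K) (hx : x ∈ K) :
    ⟪R u, x⟫ = ⟪ContinuousLinearMap.adjoint p.B u, x⟫
      - ∫ ξ in K \ {0}, gfun u ξ / ‖ξ‖ ^ 2 ∂(p.ν x) :=
  hR u hu x hx

include hK

lemma Rdiff_pair {u v x : H} (hu : u ∈ K) (hv : v ∈ K) (hx : x ∈ K) {r : ℝ}
    (hur : ‖u‖ ≤ r) (hvr : ‖v‖ ≤ r) :
    |⟪R u, x⟫ - ⟪R v, x⟫| ≤
      (‖ContinuousLinearMap.adjoint p.B‖ + max r 1 * ‖p.muVec (K \ {0})‖) * ‖u - v‖ * ‖x‖ := by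
  haveI := p.ν_finite x hx
  have hIu := int_gdiv_ν hK p hu hx
  have hIv := int_gdiv_ν hK p hv hx
  set A := ContinuousLinearMap.adjoint p.B with hA
  rw [Rpair p hR hu hx, Rpair p hR hv hx]
  have h1 : |⟪A u, x⟫ - ⟪A v, x⟫| ≤ ‖A‖ * ‖u - v‖ * ‖x‖ := by
    rw [← inner_sub_left, ← map_sub]
    calc |⟪A (u - v), x⟫| ≤ ‖A (u - v)‖ * ‖x‖ := abs_real_inner_le_norm _ _
    _ ≤ (‖A‖ * ‖u - v‖) * ‖x‖ := by
        have := A.le_opNorm (u - v)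
        nlinarith [norm_nonneg x]
    _ = ‖A‖ * ‖u - v‖ * ‖x‖ := by ring
  have h2 : |(∫ ξ in K \ {0}, gfun u ξ / ‖ξ‖ ^ 2 ∂(p.ν x))
      - ∫ ξ in K \ {0}, gfun v ξ / ‖ξ‖ ^ 2 ∂(p.ν x)|
      ≤ (max r 1 * ‖u - v‖) * ((p.ν x) (K \ {0})).toReal := by
    rw [← integral_sub hIu hIv]
    have hbd : ∀ᵐ ξ ∂((p.ν x).restrict (K \ {0})),
        ‖gfun u ξ / ‖ξ‖ ^ 2 - gfun v ξ / ‖ξ‖ ^ 2‖ ≤ max r 1 * ‖u - v‖ := by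
      filter_upwards [ae_restrict_mem (meas_Kd hK)] with ξ hξ
      have hξn : ‖ξ‖ ≠ 0 := norm_ne_zero_iff.2 hξ.2
      have hn : (0:ℝ) < ‖ξ‖^2 := by positivity
      rw [Real.norm_eq_abs, div_sub_div_same, abs_div, abs_of_pos hn, div_le_iff₀ hn]
      calc |gfun u ξ - gfun v ξ| ≤ max r 1 * ‖ξ‖^2 * ‖u - v‖ :=
            gfun_diff_bound hK hu hv hξ.1 hur hvr
      _ = max r 1 * ‖u - v‖ * ‖ξ‖^2 := by ring
    have := norm_integral_le_of_norm_le_const hbd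
    rw [Real.norm_eq_abs] at this
    rwa [measureReal_restrict_apply_univ] at this
  have hμ : ((p.ν x) (K \ {0})).toReal = ⟪p.muVec (K \ {0}), x⟫ :=
    (p.muVec_spec _ (meas_Kd hK) x hx).symm
  have hμle : ⟪p.muVec (K \ {0}), x⟫ ≤ ‖p.muVec (K \ {0})‖ * ‖x‖ := real_inner_le_norm _ _
  have huv0 : (0:ℝ) ≤ ‖u - v‖ := norm_nonneg _
  have hmax0 : (0:ℝ) ≤ max r 1 := le_trans (by norm_num) (le_max_right r 1)
  have h3 : (max r 1 * ‖u - v‖) * ((p.ν x) (K \ {0})).toReal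
      ≤ max r 1 * ‖p.muVec (K \ {0})‖ * ‖u - v‖ * ‖x‖ := by
    rw [hμ]
    nlinarith [mul_le_mul_of_nonneg_left hμle (mul_nonneg hmax0 huv0)]
  calc |(⟪A u, x⟫ - ∫ ξ in K \ {0}, gfun u ξ / ‖ξ‖ ^ 2 ∂(p.ν x))
      - (⟪A v, x⟫ - ∫ ξ in K \ {0}, gfun v ξ / ‖ξ‖ ^ 2 ∂(p.ν x))|
      = |(⟪A u, x⟫ - ⟪A v, x⟫) - ((∫ ξ in K \ {0}, gfun u ξ / ‖ξ‖ ^ 2 ∂(p.ν x))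
        - ∫ ξ in K \ {0}, gfun v ξ / ‖ξ‖ ^ 2 ∂(p.ν x))| := by congr 1; ring
    _ ≤ |⟪A u, x⟫ - ⟪A v, x⟫| + |(∫ ξ in K \ {0}, gfun u ξ / ‖ξ‖ ^ 2 ∂(p.ν x))
        - ∫ ξ in K \ {0}, gfun v ξ / ‖ξ‖ ^ 2 ∂(p.ν x)| := abs_sub _ _
    _ ≤ ‖A‖ * ‖u - v‖ * ‖x‖ + max r 1 * ‖p.muVec (K \ {0})‖ * ‖u - v‖ * ‖x‖ :=
        add_le_add h1 (le_trans h2 h3)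
    _ = (‖A‖ + max r 1 * ‖p.muVec (K \ {0})‖) * ‖u - v‖ * ‖x‖ := by ring

lemma R_qmono {u x : H} (hu : u ∈ K) (hx : x ∈ K) (horth : ⟪u, x⟫ = 0) :
    0 ≤ ⟪R u, x⟫ := by
  haveI := p.ν_finite x hx
  have hint1 := p.ν_int u hu x hx horth
  have hint2 := int_gdiv_ν hK p hu hx
  have hle : (∫ ξ in K \ {0}, gfun u ξ / ‖ξ‖ ^ 2 ∂(p.ν x))
      ≤ ∫ ξ in K \ {0}, ⟪trunc ξ, u⟫ / ‖ξ‖ ^ 2 ∂(p.ν x) := by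
    apply integral_mono_ae hint2 hint1
    filter_upwards [ae_restrict_mem (meas_Kd hK)] with ξ hξ
    have hξn : ‖ξ‖ ≠ 0 := norm_ne_zero_iff.2 hξ.2
    have hn : (0:ℝ) < ‖ξ‖^2 := by positivity
    have := gfun_le_trunc hK hu hξ.1
    exact div_le_div_of_nonneg_right this hn.le
  have hquasi := p.B_quasi u hu x hx horth
  rw [Rpair p hR hu hx]
  linarith

lemma R_growth {u : H} (hu : u ∈ K) :
    ⟪R u, u⟫ ≤ ‖ContinuousLinearMap.adjoint p.B‖ * ‖u‖^2 + ‖p.muVec (K \ {0})‖ * ‖u‖ := by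
  haveI := p.ν_finite u hu
  have hint := int_gdiv_ν hK p hu hu
  have h1 : -(((p.ν u) (K \ {0})).toReal)
      ≤ ∫ ξ in K \ {0}, gfun u ξ / ‖ξ‖ ^ 2 ∂(p.ν u) := by
    have hconst : (∫ _ξ in K \ {0}, (-1 : ℝ) ∂(p.ν u)) = -(((p.ν u) (K \ {0})).toReal) := by
      rw [setIntegral_const]
      simp
      rfl
    rw [← hconst]
    apply integral_mono_ae (integrable_const _) hint
    filter_upwards [ae_restrict_mem (meas_Kd hK)] with ξ hξ
    have hξn : ‖ξ‖ ≠ 0 := norm_ne_zero_iff.2 hξ.2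
    have hn : (0:ℝ) < ‖ξ‖^2 := by positivity
    rw [le_div_iff₀ hn]
    have := gfun_ge hK hu hξ.1
    linarith
  have h2 : ⟪ContinuousLinearMap.adjoint p.B u, u⟫
      ≤ ‖ContinuousLinearMap.adjoint p.B‖ * ‖u‖^2 := by
    calc ⟪ContinuousLinearMap.adjoint p.B u, u⟫
        ≤ ‖(ContinuousLinearMap.adjoint p.B) u‖ * ‖u‖ := real_inner_le_norm _ _
    _ ≤ ‖ContinuousLinearMap.adjoint p.B‖ * ‖u‖^2 := by
        have := (ContinuousLinearMap.adjoint p.B).le_opNorm u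
        nlinarith [norm_nonneg u]
  have hμ : ((p.ν u) (K \ {0})).toReal = ⟪p.muVec (K \ {0}), u⟫ :=
    (p.muVec_spec _ (meas_Kd hK) u hu).symm
  have hμle : ⟪p.muVec (K \ {0}), u⟫ ≤ ‖p.muVec (K \ {0})‖ * ‖u‖ := real_inner_le_norm _ _
  rw [Rpair p hR hu hu]
  rw [hμ] at h1
  linarith

lemma R_zero (hKgen : ∀ z : H, ∃ x ∈ K, ∃ y ∈ K, z = x - y) : R 0 = 0 := by
  have h0 : ∀ x ∈ K, ⟪R 0, x⟫ = 0 := by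
    intro x hx
    rw [Rpair p hR (zero_mem hK) hx]
    have : (fun ξ : H => gfun 0 ξ / ‖ξ‖ ^ 2) = fun _ => (0:ℝ) := by
      ext ξ; rw [gfun_zero, zero_div]
    rw [this]
    simp
  have hall : ∀ h : H, ⟪R 0, h⟫ = 0 := by
    intro h
    obtain ⟨x, hx, y, hy, rfl⟩ := hKgen h
    rw [inner_sub_right, h0 x hx, h0 y hy, sub_zero]
  have := hall (R 0)
  exact inner_self_eq_zero.1 this

/-- Norm Lipschitz bound for `R` on `K ∩ ball r`, via Moreau decomposition. -/
lemma R_lip {P : H → H} (hPmem : ∀ z, P z ∈ K)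
    (hPchar : ∀ z, ∀ w ∈ K, ⟪z - P z, w - P z⟫ ≤ 0)
    {u v : H} (hu : u ∈ K) (hv : v ∈ K) {r : ℝ} (hur : ‖u‖ ≤ r) (hvr : ‖v‖ ≤ r) :
    ‖R u - R v‖ ≤ 2 * ((‖ContinuousLinearMap.adjoint p.B‖
      + max r 1 * ‖p.muVec (K \ {0})‖) * ‖u - v‖) := by
  apply norm_le_of_pairings hK hPmem hPchar
  · have h0 : (0:ℝ) ≤ ‖ContinuousLinearMap.adjoint p.B‖ := norm_nonneg _
    have h1 : (0:ℝ) ≤ max r 1 := le_trans (by norm_num) (le_max_right r 1)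
    have h2 : (0:ℝ) ≤ ‖p.muVec (K \ {0})‖ := norm_nonneg _
    positivity
  · intro x hx
    rw [inner_sub_left]
    calc |⟪R u, x⟫ - ⟪R v, x⟫|
        ≤ (‖ContinuousLinearMap.adjoint p.B‖ + max r 1 * ‖p.muVec (K \ {0})‖) * ‖u - v‖ * ‖x‖ :=
          Rdiff_pair hK p hR hu hv hx hur hvr
      _ = ((‖ContinuousLinearMap.adjoint p.B‖ + max r 1 * ‖p.muVec (K \ {0})‖) * ‖u - v‖) * ‖x‖ := by
          ring

end ROps
end Stmt7Aux

namespace Stmt7Aux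
open Set Metric
variable {H : Type*} [NormedAddCommGroup H] [InnerProductSpace ℝ H] [CompleteSpace H]

/-! ### Radial retraction -/

def ret (r : ℝ) (z : H) : H := if ‖z‖ ≤ r then z else (r / ‖z‖) • z

lemma ret_eq_self {r : ℝ} {z : H} (h : ‖z‖ ≤ r) : ret r z = z := if_pos h

lemma ret_norm_le {r : ℝ} (hr : 0 ≤ r) (z : H) : ‖ret r z‖ ≤ r := by
  unfold ret
  split_ifs with h
  · exact h
  · push_neg at h
    have hz : (0:ℝ) < ‖z‖ := lt_of_le_of_lt hr h
    rw [norm_smul, Real.norm_eq_abs, abs_div, abs_of_nonneg hr, abs_of_pos hz]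
    rw [div_mul_cancel₀ _ hz.ne']

lemma ret_smul {r : ℝ} (hr : 0 < r) (z : H) :
    ∃ l : ℝ, 0 < l ∧ l ≤ 1 ∧ ret r z = l • z := by
  unfold ret
  split_ifs with h
  · exact ⟨1, one_pos, le_rfl, (one_smul ℝ z).symm⟩
  · push_neg at h
    have hz : (0:ℝ) < ‖z‖ := lt_trans hr h
    exact ⟨r / ‖z‖, div_pos hr hz, (div_le_one hz).2 h.le, rfl⟩

lemma ret_mixed {r : ℝ} (hr : 0 ≤ r) {z w : H} (hz : ‖z‖ ≤ r) (hw : r < ‖w‖) :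
    ‖z - ret r w‖ ≤ 2 * ‖z - w‖ := by
  have hw0 : (0:ℝ) < ‖w‖ := lt_of_le_of_lt hr hw
  have hret : ret r w = (r / ‖w‖) • w := if_neg (not_le.2 hw)
  set t := r / ‖w‖ with htdef
  have ht0 : 0 ≤ t := div_nonneg hr hw0.le
  have ht1 : t ≤ 1 := (div_le_one hw0).2 hw.le
  have hsplit : z - t • w = (1 - t) • z + t • (z - w) := by
    rw [sub_smul, one_smul, smul_sub]; abel
  rw [hret, hsplit]
  calc ‖(1 - t) • z + t • (z - w)‖ ≤ ‖(1 - t) • z‖ + ‖t • (z - w)‖ := norm_add_le _ _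
  _ = (1 - t) * ‖z‖ + t * ‖z - w‖ := by
      rw [norm_smul, norm_smul, Real.norm_eq_abs, Real.norm_eq_abs,
        abs_of_nonneg (by linarith), abs_of_nonneg ht0]
  _ ≤ 2 * ‖z - w‖ := by
      have h1 : (1 - t) * ‖z‖ ≤ (1 - t) * r := by nlinarith
      have h2 : (1 - t) * r ≤ ‖w‖ - r := by
        have : t * ‖w‖ = r := by
          rw [htdef]; exact div_mul_cancel₀ _ hw0.ne'
        nlinarith
      have h3 : ‖w‖ - r ≤ ‖w‖ - ‖z‖ := by linarith
      have h4 : ‖w‖ - ‖z‖ ≤ ‖w - z‖ := by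
        have := norm_sub_norm_le w z
        linarith [abs_le.1 (abs_norm_sub_norm_le w z)]
      have h5 : ‖w - z‖ = ‖z - w‖ := norm_sub_rev w z
      have h6 : t * ‖z - w‖ ≤ ‖z - w‖ := by nlinarith [norm_nonneg (z - w)]
      linarith

lemma ret_out_le {r : ℝ} (hr : 0 ≤ r) {z w : H} (hwz : ‖w‖ ≤ ‖z‖) (hzr : r < ‖z‖)
    (hwr : r < ‖w‖) : ‖ret r z - ret r w‖ ≤ 2 * ‖z - w‖ := by
  have hw0 : (0:ℝ) < ‖w‖ := lt_of_le_of_lt hr hwr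
  have hz0 : (0:ℝ) < ‖z‖ := lt_of_le_of_lt hr hzr
  unfold ret
  rw [if_neg (not_le.2 hzr), if_neg (not_le.2 hwr)]
  have hsplit : (r / ‖z‖) • z - (r / ‖w‖) • w
      = (r / ‖z‖) • (z - w) + (r / ‖z‖ - r / ‖w‖) • w := by
    rw [smul_sub, sub_smul]; abel
  rw [hsplit]
  have hd1 : r / ‖z‖ ≤ 1 := (div_le_one hz0).2 hzr.le
  have hd0 : 0 ≤ r / ‖z‖ := div_nonneg hr hz0.le
  have hdle : r / ‖z‖ ≤ r / ‖w‖ :=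
    div_le_div_of_nonneg_left hr hw0 hwz
  have habs : ‖(r / ‖z‖ - r / ‖w‖) • w‖ = (r / ‖w‖ - r / ‖z‖) * ‖w‖ := by
    rw [norm_smul, Real.norm_eq_abs, abs_of_nonpos (by linarith)]
    ring
  have hkey : (r / ‖w‖ - r / ‖z‖) * ‖w‖ = (r / ‖z‖) * (‖z‖ - ‖w‖) := by
    have e1 : r / ‖w‖ * ‖w‖ = r := div_mul_cancel₀ _ hw0.ne'
    have e2 : r / ‖z‖ * ‖z‖ = r := div_mul_cancel₀ _ hz0.ne'
    linear_combination e1 - e2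
  have h2 : ‖(r / ‖z‖ - r / ‖w‖) • w‖ ≤ ‖z‖ - ‖w‖ := by
    rw [habs, hkey]
    nlinarith [sub_nonneg.2 hwz]
  have h3 : ‖z‖ - ‖w‖ ≤ ‖z - w‖ := by
    linarith [abs_le.1 (abs_norm_sub_norm_le z w)]
  have h1 : ‖(r / ‖z‖) • (z - w)‖ ≤ ‖z - w‖ := by
    rw [norm_smul, Real.norm_eq_abs, abs_of_nonneg hd0]
    nlinarith [norm_nonneg (z - w)]
  calc ‖(r / ‖z‖) • (z - w) + (r / ‖z‖ - r / ‖w‖) • w‖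
      ≤ ‖(r / ‖z‖) • (z - w)‖ + ‖(r / ‖z‖ - r / ‖w‖) • w‖ := norm_add_le _ _
  _ ≤ 2 * ‖z - w‖ := by linarith

lemma ret_lip {r : ℝ} (hr : 0 ≤ r) (z w : H) : ‖ret r z - ret r w‖ ≤ 2 * ‖z - w‖ := by
  by_cases hz : ‖z‖ ≤ r <;> by_cases hw : ‖w‖ ≤ r
  · rw [ret_eq_self hz, ret_eq_self hw]
    nlinarith [norm_nonneg (z - w)]
  · push_neg at hw
    rw [ret_eq_self hz]
    exact ret_mixed hr hz hw
  · push_neg at hz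
    rw [ret_eq_self hw, norm_sub_rev]
    calc ‖w - ret r z‖ ≤ 2 * ‖w - z‖ := ret_mixed hr hw hz
    _ = 2 * ‖z - w‖ := by rw [norm_sub_rev]
  · push_neg at hz hw
    rcases le_total ‖w‖ ‖z‖ with hle | hle
    · exact ret_out_le hr hle hz hw
    · rw [norm_sub_rev]
      calc ‖ret r w - ret r z‖ ≤ 2 * ‖w - z‖ := ret_out_le hr hle hw hz
      _ = 2 * ‖z - w‖ := by rw [norm_sub_rev]

lemma ret_mem {K : Set H} (hK : IsSelfDualCone K) {r : ℝ} (hr : 0 < r) {z : H}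
    (hz : z ∈ K) : ret r z ∈ K := by
  obtain ⟨l, hl0, _, hlz⟩ := ret_smul hr z
  rw [hlz]
  exact smul_mem hK hl0.le hz

/-! ### Grönwall bound monotonicity -/

lemma gronwallBound_mono {δ K ε x y : ℝ} (hδ : 0 ≤ δ) (hε : 0 ≤ ε) (hK : 0 < K)
    (hx : 0 ≤ x) (hxy : x ≤ y) : gronwallBound δ K ε x ≤ gronwallBound δ K ε y := by
  simp only [gronwallBound_of_K_ne_0 hK.ne']
  have h1 : Real.exp (K * x) ≤ Real.exp (K * y) :=
    Real.exp_le_exp.2 (mul_le_mul_of_nonneg_left hxy hK.le)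
  have h2 : (0:ℝ) < Real.exp (K * x) := Real.exp_pos _
  have h3 : 0 ≤ ε / K := div_nonneg hε hK.le
  nlinarith

lemma gronwallBound_nonneg {δ K ε x : ℝ} (hδ : 0 ≤ δ) (hε : 0 ≤ ε) (hK : 0 < K)
    (hx : 0 ≤ x) : 0 ≤ gronwallBound δ K ε x := by
  simp only [gronwallBound_of_K_ne_0 hK.ne']
  have h1 : (1:ℝ) ≤ Real.exp (K * x) := by
    rw [Real.one_le_exp_iff]
    positivity
  have h3 : 0 ≤ ε / K := div_nonneg hε hK.le
  nlinarith [Real.exp_pos (K * x)]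

/-! ### Right slope limits -/

lemma slope_tendsto_right {f : ℝ → H} {V : H} {a b t : ℝ} (ht : t ∈ Ico a b)
    (h : HasDerivWithinAt f V (Icc a b) t) :
    Filter.Tendsto (fun z => (z - t)⁻¹ • (f z - f t)) (nhdsWithin t (Ioi t)) (nhds V) := by
  rw [hasDerivWithinAt_iff_tendsto_slope] at h
  have hmem : Icc a b \ {t} ∈ nhdsWithin t (Ioi t) := by
    have hsub : Ioc t b ⊆ Icc a b \ {t} := fun z hz =>
      ⟨⟨le_trans ht.1 hz.1.le, hz.2⟩, ne_of_gt hz.1⟩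
    exact Filter.mem_of_superset (Ioc_mem_nhdsGT ht.2) hsub
  have hle : nhdsWithin t (Ioi t) ≤ nhdsWithin t (Icc a b \ {t}) :=
    nhdsWithin_le_iff.2 hmem
  exact (h.mono_left hle)

end Stmt7Aux

namespace Stmt7Aux
open Set Metric Filter
variable {H : Type*} [NormedAddCommGroup H] [InnerProductSpace ℝ H] [CompleteSpace H]
  [MeasurableSpace H] [BorelSpace H] {K : Set H}

section Main
variable (hK : IsSelfDualCone K) (p : AdmissibleParams H K) {R : H → H}
  (hR : ∀ u ∈ K, ∀ x ∈ K, ⟪R u, x⟫ =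
      ⟪ContinuousLinearMap.adjoint p.B u, x⟫
        - ∫ ξ in K \ {0}, (Real.exp (-⟪ξ, u⟫) - 1 + ⟪trunc ξ, u⟫) / ‖ξ‖ ^ 2 ∂(p.ν x))
  {P : H → H} (hPmem : ∀ z, P z ∈ K)
  (hPchar : ∀ z, ∀ w ∈ K, ⟪z - P z, w - P z⟫ ≤ 0)

include hK hR hPmem hPchar

/-- Uniqueness of `K`-valued solutions of `ψ' = R(ψ)` on `[0, T]`. -/
lemma uniq_sol {T : ℝ} {f g : ℝ → H}
    (hfc : ContinuousOn f (Icc 0 T)) (hfK : ∀ t ∈ Icc (0:ℝ) T, f t ∈ K)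
    (hfd : ∀ t ∈ Ico (0:ℝ) T, HasDerivWithinAt f (R (f t)) (Ici t) t)
    (hgc : ContinuousOn g (Icc 0 T)) (hgK : ∀ t ∈ Icc (0:ℝ) T, g t ∈ K)
    (hgd : ∀ t ∈ Ico (0:ℝ) T, HasDerivWithinAt g (R (g t)) (Ici t) t)
    (h0 : f 0 = g 0) : EqOn f g (Icc 0 T) := by
  obtain ⟨Cf, hCf⟩ := isCompact_Icc.exists_bound_of_continuousOn hfc
  obtain ⟨Cg, hCg⟩ := isCompact_Icc.exists_bound_of_continuousOn hgc
  set r := max (max Cf Cg) 0 with hrdef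
  set L₀ := ‖ContinuousLinearMap.adjoint p.B‖ + max r 1 * ‖p.muVec (K \ {0})‖ with hL₀def
  have hmax0 : (0:ℝ) ≤ max r 1 := le_trans zero_le_one (le_max_right r 1)
  have hL₀0 : 0 ≤ L₀ := add_nonneg (norm_nonneg _) (mul_nonneg hmax0 (norm_nonneg _))
  have hv : ∀ _t : ℝ, LipschitzOnWith (Real.toNNReal (2 * L₀)) R (K ∩ closedBall (0:H) r) := by
    intro t
    apply LipschitzOnWith.of_dist_le_mul
    intro x hx y hy
    rw [dist_eq_norm, dist_eq_norm, Real.coe_toNNReal _ (by linarith)]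
    have h1 := R_lip hK p hR hPmem hPchar hx.1 hy.1
      (mem_closedBall_zero_iff.1 hx.2) (mem_closedBall_zero_iff.1 hy.2)
    rw [← hL₀def] at h1
    linarith
  have hfs : ∀ t ∈ Ico (0:ℝ) T, f t ∈ K ∩ closedBall (0:H) r := fun t ht =>
    ⟨hfK t (Ico_subset_Icc_self ht), mem_closedBall_zero_iff.2
      (le_trans (hCf t (Ico_subset_Icc_self ht)) (le_trans (le_max_left Cf Cg) (le_max_left _ 0)))⟩
  have hgs : ∀ t ∈ Ico (0:ℝ) T, g t ∈ K ∩ closedBall (0:H) r := fun t ht =>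
    ⟨hgK t (Ico_subset_Icc_self ht), mem_closedBall_zero_iff.2
      (le_trans (hCg t (Ico_subset_Icc_self ht)) (le_trans (le_max_right Cf Cg) (le_max_left _ 0)))⟩
  exact ODE_solution_unique_of_mem_Icc_right (fun t _ => hv t) hfc hfd hfs hgc hgd hgs h0

set_option maxHeartbeats 2000000 in
/-- Existence of a `K`-valued solution of `ψ' = R(ψ)` on `[0, n]`. -/
lemma exists_sol (hKgen : ∀ z : H, ∃ x ∈ K, ∃ y ∈ K, z = x - y)
    {u : H} (hu : u ∈ K) (n : ℕ) :
    ∃ f : ℝ → H, f 0 = u ∧ (∀ t ∈ Icc (0:ℝ) n, f t ∈ K) ∧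
      ∀ t ∈ Icc (0:ℝ) n, HasDerivWithinAt f (R (f t)) (Icc (0:ℝ) n) t := by
  set a := ‖ContinuousLinearMap.adjoint p.B‖ with ha
  set c := ‖p.muVec (K \ {0})‖ with hc
  have ha0 : 0 ≤ a := norm_nonneg _
  have hc0 : 0 ≤ c := norm_nonneg _
  have hKc : (0:ℝ) < 2*a + c + 1 := by linarith
  set gB := gronwallBound (‖u‖^2) (2*a + c + 1) c n with hgBdef
  have hgB0 : 0 ≤ gB := gronwallBound_nonneg (by positivity) hc0 hKc (Nat.cast_nonneg n)
  set r := Real.sqrt gB + 1 with hrdef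
  have hsq0 : 0 ≤ Real.sqrt gB := Real.sqrt_nonneg gB
  have hr1 : 1 ≤ r := by linarith
  have hr0 : (0:ℝ) < r := by linarith
  set L₀ := a + max r 1 * c with hL₀def
  have hmax0 : (0:ℝ) ≤ max r 1 := le_trans zero_le_one (le_max_right r 1)
  have hL₀0 : 0 ≤ L₀ := add_nonneg ha0 (mul_nonneg hmax0 hc0)
  set G := fun z : H => R (ret r (P z)) with hGdef
  have hw_mem : ∀ z : H, ret r (P z) ∈ K := fun z => ret_mem hK hr0 (hPmem z)
  have hw_norm : ∀ z : H, ‖ret r (P z)‖ ≤ r := fun _z => ret_norm_le hr0.le _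
  have hR0 : R 0 = 0 := R_zero hK p hR hKgen
  have hGlip : ∀ z w : H, ‖G z - G w‖ ≤ (4 * L₀) * ‖z - w‖ := by
    intro z w
    have h1 := R_lip hK p hR hPmem hPchar (hw_mem z) (hw_mem w) (hw_norm z) (hw_norm w)
    rw [← hL₀def] at h1
    have h2 : ‖ret r (P z) - ret r (P w)‖ ≤ 2 * ‖P z - P w‖ := ret_lip hr0.le _ _
    have h3 : ‖P z - P w‖ ≤ ‖z - w‖ := proj_lip hPmem hPchar z w
    calc ‖G z - G w‖ ≤ 2 * (L₀ * ‖ret r (P z) - ret r (P w)‖) := h1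
    _ ≤ (4 * L₀) * ‖z - w‖ := by nlinarith [norm_nonneg (ret r (P z) - ret r (P w))]
  have hGbd : ∀ z : H, ‖G z‖ ≤ 2 * (L₀ * r) := by
    intro z
    have h1 := R_lip hK p hR hPmem hPchar (hw_mem z) (zero_mem hK) (hw_norm z)
      (by rw [norm_zero]; linarith)
    rw [← hL₀def, hR0, sub_zero, sub_zero] at h1
    calc ‖G z‖ ≤ 2 * (L₀ * ‖ret r (P z)‖) := h1
    _ ≤ 2 * (L₀ * r) := by nlinarith [hw_norm z]
  set C := 2 * (L₀ * r) with hCdef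
  have hC0 : 0 ≤ C := by
    have := mul_nonneg hL₀0 hr0.le
    linarith
  have hn0 : (0:ℝ) ≤ (n:ℝ) := Nat.cast_nonneg n
  -- Picard–Lindelöf
  have hpl : IsPicardLindelof (fun _ x => G x) (⟨0, ⟨le_rfl, hn0⟩⟩ : Icc (0:ℝ) n) u
      (Real.toNNReal (C*n+1)) 0 (Real.toNNReal C) (Real.toNNReal (4*L₀)) := by
    constructor
    · intro t _ht
      apply LipschitzOnWith.of_dist_le_mul
      intro x _hx y _hy
      rw [dist_eq_norm, dist_eq_norm, Real.coe_toNNReal _ (by linarith)]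
      exact hGlip x y
    · exact fun x _hx => continuousOn_const
    · intro t _ht x _hx
      rw [Real.coe_toNNReal _ hC0]
      exact hGbd x
    · have e1 : ((Real.toNNReal C : ℝ)) = C := Real.coe_toNNReal _ hC0
      have e2 : ((Real.toNNReal (C*n+1)) : ℝ) = C*n+1 :=
        Real.coe_toNNReal _ (by nlinarith [mul_nonneg hC0 hn0])
      dsimp only
      rw [e1, e2]
      simp only [NNReal.coe_zero, sub_zero, max_eq_left hn0]
      linarith
  obtain ⟨f, hf0, hfd⟩ := hpl.exists_eq_forall_mem_Icc_hasDerivWithinAt₀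
  replace hf0 : f 0 = u := hf0
  have hfc : ContinuousOn f (Icc 0 (n:ℝ)) := fun t ht => (hfd t ht).continuousWithinAt
  have hPcont : Continuous P := by
    have : LipschitzWith 1 P := LipschitzWith.of_dist_le_mul (fun x y => by
      rw [dist_eq_norm, dist_eq_norm, NNReal.coe_one, one_mul]
      exact proj_lip hPmem hPchar x y)
    exact this.continuous
  -- Invariance: f stays in K
  have hinv : ∀ t ∈ Icc (0:ℝ) n, f t ∈ K := by
    set dd := fun t => ‖P (f t) - f t‖^2 with hdd
    have hddcont : ContinuousOn dd (Icc 0 (n:ℝ)) :=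
      (((hPcont.comp_continuousOn hfc).sub hfc).norm.pow 2)
    have key : ∀ x ∈ Icc (0:ℝ) n, dd x ≤ gronwallBound 0 0 0 (x - 0) := by
      apply le_gronwallBound_of_liminf_deriv_right_le (f' := fun _ => (0:ℝ)) hddcont
      · intro x hx r' hr'
        set V := G (f x) with hV
        have hS := slope_tendsto_right hx (hfd x (Ico_subset_Icc_self hx))
        set q := P (f x) - f x with hq
        have hqK : q ∈ K := proj_qmem hK hPmem hPchar (f x)
        have hVq : 0 ≤ ⟪V, q⟫ := by
          have horth : ⟪ret r (P (f x)), q⟫ = 0 := by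
            obtain ⟨l, _hl0, _hl1, hlz⟩ := ret_smul hr0 (P (f x))
            rw [hlz, real_inner_smul_left, proj_orth hK hPmem hPchar (f x), mul_zero]
          exact R_qmono hK p hR (hw_mem (f x)) hqK horth
        have h0' : Tendsto (fun z : ℝ => z - x) (nhdsWithin x (Ioi x)) (nhds (0:ℝ)) := by
          have hcont : Continuous (fun z : ℝ => z - x) := continuous_id.sub continuous_const
          have h2 := (hcont.tendsto x).mono_left (nhdsWithin_le_nhds (s := Ioi x))
          simpa using h2
        have hE : Tendsto (fun z => (z - x) * ‖(z - x)⁻¹ • (f z - f x)‖^2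
            - 2 * ⟪(z - x)⁻¹ • (f z - f x), q⟫) (nhdsWithin x (Ioi x))
            (nhds (0 * ‖V‖^2 - 2 * ⟪V, q⟫)) :=
          (h0'.mul ((hS.norm).pow 2)).sub ((hS.inner tendsto_const_nhds).const_mul 2)
        have hlim : 0 * ‖V‖^2 - 2 * ⟪V, q⟫ < r' := by nlinarith
        have hev1 := hE.eventually_lt_const hlim
        have hev2 : ∀ᶠ z in nhdsWithin x (Ioi x), z ∈ Ioc x (n:ℝ) :=
          Ioc_mem_nhdsGT hx.2
        refine ((hev1.and hev2).mono ?_).frequently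
        rintro z ⟨hEz, hz⟩
        have hzx : 0 < z - x := sub_pos.2 hz.1
        set S := (z - x)⁻¹ • (f z - f x) with hSdef
        have hSz : f z - f x = (z - x) • S := by
          rw [hSdef, smul_smul, mul_inv_cancel₀ hzx.ne', one_smul]
        have hddz : dd z ≤ ‖f z - P (f x)‖^2 := by
          have h1 : ‖P (f z) - f z‖ ≤ ‖P (f x) - f z‖ :=
            proj_nearest hPmem hPchar (f z) (hPmem (f x))
          have h2 : ‖P (f x) - f z‖ = ‖f z - P (f x)‖ := norm_sub_rev _ _
          rw [h2] at h1
          have h3 : ‖P (f z) - f z‖^2 ≤ ‖f z - P (f x)‖^2 := by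
            nlinarith [norm_nonneg (P (f z) - f z)]
          exact h3
        have hexp : ‖f z - P (f x)‖^2 = ‖f z - f x‖^2 - 2*⟪f z - f x, q⟫ + ‖q‖^2 := by
          have he : f z - P (f x) = (f z - f x) - q := by rw [hq]; abel
          rw [he, @norm_sub_sq_real]
        have hn1 : ‖f z - f x‖ = (z - x) * ‖S‖ := by
          rw [hSz, norm_smul, Real.norm_eq_abs, abs_of_pos hzx]
        have hn2 : ⟪f z - f x, q⟫ = (z - x) * ⟪S, q⟫ := by
          rw [hSz, real_inner_smul_left]
        have hcalc : (z - x)⁻¹ * (dd z - dd x)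
            ≤ (z - x) * ‖S‖^2 - 2 * ⟪S, q⟫ := by
          have hddx : dd x = ‖q‖^2 := by rw [hdd, hq]
          have hstep : dd z - dd x ≤ ‖f z - f x‖^2 - 2*⟪f z - f x, q⟫ := by
            rw [hddx]
            have := hddz.trans (le_of_eq hexp)
            linarith
          have hstep2 : ‖f z - f x‖^2 - 2*⟪f z - f x, q⟫
              = (z - x) * ((z - x) * ‖S‖^2 - 2 * ⟪S, q⟫) := by
            rw [hn1, hn2]; ring
          calc (z - x)⁻¹ * (dd z - dd x)
              ≤ (z - x)⁻¹ * ((z - x) * ((z - x) * ‖S‖^2 - 2 * ⟪S, q⟫)) := by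
                rw [← hstep2]
                exact mul_le_mul_of_nonneg_left hstep (inv_nonneg.2 hzx.le)
            _ = (z - x) * ‖S‖^2 - 2 * ⟪S, q⟫ := by
                rw [inv_mul_cancel_left₀ hzx.ne']
        exact lt_of_le_of_lt hcalc hEz
      · rw [hdd]
        simp only [hf0]
        rw [proj_fix hPmem hPchar hu, sub_self, norm_zero]
        norm_num
      · intro x _hx
        simp
    intro t ht
    have h1 := key t ht
    rw [gronwallBound_ε0_δ0] at h1
    have h2 : P (f t) - f t = 0 := by
      have h3 : ‖P (f t) - f t‖^2 ≤ 0 := h1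
      have h4 := sq_nonneg ‖P (f t) - f t‖
      have h5 : ‖P (f t) - f t‖^2 = 0 := le_antisymm h3 h4
      have h6 : ‖P (f t) - f t‖ = 0 := by
        nlinarith [norm_nonneg (P (f t) - f t)]
      exact norm_eq_zero.1 h6
    have := sub_eq_zero.1 h2
    rw [← this]
    exact hPmem (f t)
  -- Growth bound
  have hgrow : ∀ t ∈ Icc (0:ℝ) n, ‖f t‖^2 ≤ gB := by
    set y := fun t => ‖f t‖^2 with hy
    have hycont : ContinuousOn y (Icc 0 (n:ℝ)) := hfc.norm.pow 2
    have key : ∀ x ∈ Icc (0:ℝ) n, y x ≤ gronwallBound (‖u‖^2) (2*a+c+1) c (x - 0) := by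
      apply le_gronwallBound_of_liminf_deriv_right_le
        (f' := fun x => 2*⟪G (f x), f x⟫) hycont
      · intro x hx r' hr'
        set V := G (f x) with hV
        have hS := slope_tendsto_right hx (hfd x (Ico_subset_Icc_self hx))
        have hfx : Tendsto f (nhdsWithin x (Ioi x)) (nhds (f x)) := by
          have h1 : ContinuousWithinAt f (Icc 0 (n:ℝ)) x :=
            hfc x (Ico_subset_Icc_self hx)
          apply h1.mono_of_mem_nhdsWithin
          exact Filter.mem_of_superset (Ioc_mem_nhdsGT hx.2)
            (fun z hz => ⟨le_trans hx.1 hz.1.le, hz.2⟩)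
        have hE : Tendsto (fun z => ⟪(z - x)⁻¹ • (f z - f x), f z + f x⟫)
            (nhdsWithin x (Ioi x)) (nhds ⟪V, f x + f x⟫) :=
          hS.inner (hfx.add tendsto_const_nhds)
        have hlim : ⟪V, f x + f x⟫ = 2*⟪G (f x), f x⟫ := by
          rw [inner_add_right, hV]; ring
        rw [hlim] at hE
        have hev1 := hE.eventually_lt_const hr'
        have hev2 : ∀ᶠ z in nhdsWithin x (Ioi x), z ∈ Ioi x := eventually_mem_nhdsWithin
        refine ((hev1.and hev2).mono ?_).frequently
        rintro z ⟨hEz, hz⟩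
        have hzx : 0 < z - x := sub_pos.2 hz
        have hid : (z - x)⁻¹ * (y z - y x) = ⟪(z - x)⁻¹ • (f z - f x), f z + f x⟫ := by
          rw [real_inner_smul_left]
          congr 1
          rw [hy]
          simp only []
          rw [inner_sub_left, inner_add_right, inner_add_right,
            real_inner_self_eq_norm_sq, real_inner_self_eq_norm_sq,
            real_inner_comm (f z) (f x)]
          ring
        rw [hid]
        exact hEz
      · rw [hy]
        simp only [hf0]
        norm_num
      · intro x hx
        show 2*⟪G (f x), f x⟫ ≤ (2*a+c+1) * (y x) + c
        have hfxK := hinv x (Ico_subset_Icc_self hx)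
        have hPfx : P (f x) = f x := proj_fix hPmem hPchar hfxK
        obtain ⟨l, hl0, hl1, hlz⟩ := ret_smul hr0 (f x)
        have hwK : ret r (f x) ∈ K := ret_mem hK hr0 hfxK
        have hgrowth := R_growth hK p hR hwK
        rw [← ha, ← hc] at hgrowth
        have hnw : ‖ret r (f x)‖ = l * ‖f x‖ := by
          rw [hlz, norm_smul, Real.norm_eq_abs, abs_of_pos hl0]
        have hGfx : G (f x) = R (ret r (f x)) := by rw [hGdef]; simp only [hPfx]
        have hpair : l * ⟪G (f x), f x⟫ = ⟪R (ret r (f x)), ret r (f x)⟫ := by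
          rw [hGfx]
          nth_rewrite 3 [hlz]
          rw [real_inner_smul_right]
        have h₁ : ⟪R (ret r (f x)), ret r (f x)⟫ ≤ a * (l*‖f x‖)^2 + c * (l*‖f x‖) := by
          rw [← hnw]
          calc ⟪R (ret r (f x)), ret r (f x)⟫ ≤ a * ‖ret r (f x)‖^2 + c * ‖ret r (f x)‖ :=
            hgrowth
          _ = a * ‖ret r (f x)‖^2 + c * ‖ret r (f x)‖ := rfl
        have h₂ : ⟪G (f x), f x⟫ ≤ a * l * ‖f x‖^2 + c * ‖f x‖ := by
          have h3 : l * ⟪G (f x), f x⟫ ≤ a * (l*‖f x‖)^2 + c * (l*‖f x‖) := by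
            rw [hpair]; exact h₁
          have h4 : a * (l*‖f x‖)^2 + c * (l*‖f x‖) = l * (a * l * ‖f x‖^2 + c * ‖f x‖) := by
            ring
          rw [h4] at h3
          exact le_of_mul_le_mul_left h3 hl0
        have hyx : y x = ‖f x‖^2 := rfl
        rw [hyx]
        have hbase : 2*⟪G (f x), f x⟫ ≤ 2*a*l*‖f x‖^2 + 2*c*‖f x‖ := by linarith
        have hsl : a*l*‖f x‖^2 ≤ a*‖f x‖^2 := by
          nlinarith [mul_nonneg (mul_nonneg ha0 (sub_nonneg.2 hl1)) (sq_nonneg ‖f x‖)]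
        have hcs : 2*c*‖f x‖ ≤ c*‖f x‖^2 + c := by
          nlinarith [sq_nonneg (‖f x‖ - 1)]
        nlinarith [sq_nonneg ‖f x‖]
    intro t ht
    have h1 := key t ht
    rw [sub_zero] at h1
    calc y t ≤ gronwallBound (‖u‖^2) (2*a+c+1) c t := h1
    _ ≤ gB := by
        rw [hgBdef]
        exact gronwallBound_mono (by positivity) hc0 hKc ht.1 ht.2
  -- On the trajectory, G = R
  have hfinal : ∀ t ∈ Icc (0:ℝ) n, G (f t) = R (f t) := by
    intro t ht
    have h1 : ‖f t‖ ≤ r := by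
      have h2 := hgrow t ht
      have h3 : ‖f t‖ ≤ Real.sqrt gB := by
        rw [← Real.sqrt_sq (norm_nonneg (f t))]
        exact Real.sqrt_le_sqrt h2
      linarith
    have hPfx : P (f t) = f t := proj_fix hPmem hPchar (hinv t ht)
    rw [hGdef]
    simp only [hPfx]
    rw [ret_eq_self h1]
  refine ⟨f, hf0, hinv, fun t ht => ?_⟩
  have := hfd t ht
  rwa [hfinal t ht] at this

end Main
end Stmt7Aux


open Stmt7Aux Set Metric

/-- If `K` is regular, then for every `u ∈ K` the generalized Riccati
equations `∂φ/∂t = F(ψ)`, `∂ψ/∂t = R(ψ)`, `φ(0,u) = 0`, `ψ(0,u) = u` have a unique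
`C¹`-solution with `φ` nonnegative and `ψ` `K`-valued. -/
theorem stmt_7 {H : Type*} [NormedAddCommGroup H] [InnerProductSpace ℝ H] [CompleteSpace H]
    [MeasurableSpace H] [BorelSpace H] (K : Set H)
    (hK : IsSelfDualCone K) (hKgen : ∀ z : H, ∃ x ∈ K, ∃ y ∈ K, z = x - y)
    (hreg : IsRegularCone K)
    (p : AdmissibleParams H K)
    (F : H → ℝ)
    (hF : ∀ u : H, F u = ⟪p.b, u⟫ -
      ∫ ξ in K \ {0}, (Real.exp (-⟪ξ, u⟫) - 1 + ⟪trunc ξ, u⟫) ∂p.m)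
    (R : H → H)
    (hR : ∀ u ∈ K, ∀ x ∈ K, ⟪R u, x⟫ =
      ⟪ContinuousLinearMap.adjoint p.B u, x⟫
        - ∫ ξ in K \ {0}, (Real.exp (-⟪ξ, u⟫) - 1 + ⟪trunc ξ, u⟫) / ‖ξ‖ ^ 2 ∂(p.ν x))
    (u : H) (hu : u ∈ K) :
    ∃ φ : ℝ → ℝ, ∃ ψ : ℝ → H,
      (φ 0 = 0 ∧ ψ 0 = u ∧
        (∀ t, 0 ≤ t → 0 ≤ φ t ∧ ψ t ∈ K) ∧
        (∀ t, 0 ≤ t → HasDerivWithinAt φ (F (ψ t)) (Set.Ici 0) t ∧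
          HasDerivWithinAt ψ (R (ψ t)) (Set.Ici 0) t) ∧
        ContinuousOn (fun t => F (ψ t)) (Set.Ici 0) ∧
        ContinuousOn (fun t => R (ψ t)) (Set.Ici 0)) ∧
      (∀ φ' : ℝ → ℝ, ∀ ψ' : ℝ → H,
        (φ' 0 = 0 ∧ ψ' 0 = u ∧
          (∀ t, 0 ≤ t → 0 ≤ φ' t ∧ ψ' t ∈ K) ∧
          (∀ t, 0 ≤ t → HasDerivWithinAt φ' (F (ψ' t)) (Set.Ici 0) t ∧
            HasDerivWithinAt ψ' (R (ψ' t)) (Set.Ici 0) t) ∧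
          ContinuousOn (fun t => F (ψ' t)) (Set.Ici 0) ∧
          ContinuousOn (fun t => R (ψ' t)) (Set.Ici 0)) →
        ∀ t, 0 ≤ t → φ' t = φ t ∧ ψ' t = ψ t) := by
  classical
  -- projection onto K
  have hKne : K.Nonempty := ⟨0, zero_mem hK⟩
  choose P hPmem hPchar using exists_proj (Stmt7Aux.isClosed hK) (Stmt7Aux.convex hK) hKne
  -- family of solutions on [0, n]
  choose S hS0 hSK hSd using fun n : ℕ =>
    exists_sol hK p hR hPmem hPchar hKgen hu n
  -- derivative within Ici t
  have hconv : ∀ (n : ℕ) (t : ℝ), t ∈ Ico (0:ℝ) n →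
      HasDerivWithinAt (S n) (R (S n t)) (Ici t) t := by
    intro n t ht
    apply (hSd n t (Ico_subset_Icc_self ht)).mono_of_mem_nhdsWithin
    exact mem_nhdsWithin.2 ⟨Iio (n:ℝ), isOpen_Iio, ht.2,
      fun z hz => ⟨le_trans ht.1 hz.2, hz.1.le⟩⟩
  -- consistency of the family
  have hagree : ∀ (m n : ℕ) (t : ℝ), 0 ≤ t → t ≤ m → t ≤ n → S m t = S n t := by
    intro m n t ht0 htm htn
    have hcm : ContinuousOn (S m) (Icc 0 (min (m:ℝ) n)) := fun s hs =>
      ((hSd m s ⟨hs.1, le_trans hs.2 (min_le_left _ _)⟩).continuousWithinAt).mono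
        (Icc_subset_Icc le_rfl (min_le_left _ _))
    have hcn : ContinuousOn (S n) (Icc 0 (min (m:ℝ) n)) := fun s hs =>
      ((hSd n s ⟨hs.1, le_trans hs.2 (min_le_right _ _)⟩).continuousWithinAt).mono
        (Icc_subset_Icc le_rfl (min_le_right _ _))
    have h := uniq_sol hK p hR hPmem hPchar (T := min (m:ℝ) n) hcm
      (fun s hs => hSK m s ⟨hs.1, le_trans hs.2 (min_le_left _ _)⟩)
      (fun s hs => hconv m s ⟨hs.1, lt_of_lt_of_le hs.2 (min_le_left _ _)⟩)
      hcn
      (fun s hs => hSK n s ⟨hs.1, le_trans hs.2 (min_le_right _ _)⟩)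
      (fun s hs => hconv n s ⟨hs.1, lt_of_lt_of_le hs.2 (min_le_right _ _)⟩)
      (by rw [hS0 m, hS0 n])
    exact h ⟨ht0, le_min htm htn⟩
  -- the glued solution
  set ψ : ℝ → H := fun t => S (⌈max t 0⌉₊ + 1) (max t 0) with hψdef
  have hceil : ∀ t : ℝ, 0 ≤ t → t ≤ ((⌈t⌉₊ + 1 : ℕ) : ℝ) := by
    intro t _ht
    push_cast
    linarith [Nat.le_ceil t]
  have hψeq : ∀ (n : ℕ) (t : ℝ), 0 ≤ t → t ≤ n → ψ t = S n t := by
    intro n t ht0 htn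
    have hmax : max t 0 = t := max_eq_left ht0
    show S (⌈max t 0⌉₊ + 1) (max t 0) = S n t
    rw [hmax]
    exact hagree (⌈t⌉₊ + 1) n t ht0 (hceil t ht0) htn
  have hψ0 : ψ 0 = u := by
    rw [hψeq 1 0 le_rfl (by norm_num)]
    exact hS0 1
  have hψmem : ∀ t : ℝ, 0 ≤ t → ψ t ∈ K := by
    intro t ht
    rw [hψeq (⌈t⌉₊ + 1) t ht (hceil t ht)]
    exact hSK _ t ⟨ht, hceil t ht⟩
  have hψKall : ∀ t : ℝ, ψ t ∈ K := by
    intro t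
    have hsame : ψ t = ψ (max t 0) := by
      show S (⌈max t 0⌉₊ + 1) (max t 0) = S (⌈max (max t 0) 0⌉₊ + 1) (max (max t 0) 0)
      rw [max_eq_left (le_max_right t 0)]
    rw [hsame]
    exact hψmem _ (le_max_right t 0)
  have hψd : ∀ t : ℝ, 0 ≤ t → HasDerivWithinAt ψ (R (ψ t)) (Ici 0) t := by
    intro t ht
    set n := ⌈t⌉₊ + 1 with hn
    have htlt : t < (n:ℝ) := by
      have := Nat.le_ceil t
      rw [hn]; push_cast; linarith
    have hd : HasDerivWithinAt (S n) (R (S n t)) (Ici 0) t := by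
      apply (hSd n t ⟨ht, htlt.le⟩).mono_of_mem_nhdsWithin
      exact mem_nhdsWithin.2 ⟨Iio (n:ℝ), isOpen_Iio, htlt,
        fun z hz => ⟨hz.2, hz.1.le⟩⟩
    have heq : ∀ᶠ z in nhdsWithin t (Ici 0), ψ z = S n z := by
      have : {z : ℝ | ψ z = S n z} ∈ nhdsWithin t (Ici 0) :=
        mem_nhdsWithin.2 ⟨Iio (n:ℝ), isOpen_Iio, htlt,
          fun z hz => hψeq n z hz.2 hz.1.le⟩
      exact this
    have hteq : ψ t = S n t := hψeq n t ht htlt.le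
    have hfinal := hd.congr_of_eventuallyEq heq hteq
    rwa [← hteq] at hfinal
  have hψcontOn : ContinuousOn ψ (Ici 0) := fun t ht => (hψd t ht).continuousWithinAt
  have hψcont : Continuous ψ := by
    have hcomp : ψ = fun t => ψ (max t 0) := by
      funext t
      show S (⌈max t 0⌉₊ + 1) (max t 0) = S (⌈max (max t 0) 0⌉₊ + 1) (max (max t 0) 0)
      rw [max_eq_left (le_max_right t 0)]
    rw [hcomp]
    exact hψcontOn.comp_continuous (continuous_id.max continuous_const)
      (fun t => le_max_right t 0)
  -- continuity of F and R on K
  have hFcontK : ContinuousOn F K := by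
    intro w hw
    set r := ‖w‖ + 1 with hr
    have hlip : LipschitzOnWith
        (Real.toNNReal (‖p.b‖ + max r 1 * ∫ ξ in K \ {0}, ‖ξ‖^2 ∂p.m)) F
        (K ∩ closedBall (0:H) r) := by
      apply LipschitzOnWith.of_dist_le_mul
      intro x hx y hy
      rw [Real.dist_eq, dist_eq_norm, Real.coe_toNNReal]
      · rw [hF x, hF y]
        exact F_lip hK p hx.1 hy.1 (mem_closedBall_zero_iff.1 hx.2)
          (mem_closedBall_zero_iff.1 hy.2)
      · have h1 : (0:ℝ) ≤ max r 1 := le_trans zero_le_one (le_max_right r 1)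
        have h2 : 0 ≤ ∫ ξ in K \ {0}, ‖ξ‖^2 ∂p.m :=
          setIntegral_nonneg (meas_Kd hK) (fun ξ _ => sq_nonneg _)
        have h3 : (0:ℝ) ≤ ‖p.b‖ := norm_nonneg _
        nlinarith
    have hmem : w ∈ K ∩ closedBall (0:H) r :=
      ⟨hw, mem_closedBall_zero_iff.2 (by rw [hr]; linarith)⟩
    apply (hlip.continuousOn w hmem).mono_of_mem_nhdsWithin
    exact mem_nhdsWithin.2 ⟨ball (0:H) r, isOpen_ball,
      mem_ball_zero_iff.2 (by rw [hr]; linarith),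
      fun z hz => ⟨hz.2, ball_subset_closedBall hz.1⟩⟩
  have hRcontK : ContinuousOn R K := by
    intro w hw
    set r := ‖w‖ + 1 with hr
    set L₀ := ‖ContinuousLinearMap.adjoint p.B‖ + max r 1 * ‖p.muVec (K \ {0})‖ with hL₀
    have hL₀0 : 0 ≤ L₀ :=
      add_nonneg (norm_nonneg _) (mul_nonneg
        (le_trans zero_le_one (le_max_right r 1)) (norm_nonneg _))
    have hlip : LipschitzOnWith (Real.toNNReal (2 * L₀)) R (K ∩ closedBall (0:H) r) := by
      apply LipschitzOnWith.of_dist_le_mul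
      intro x hx y hy
      rw [dist_eq_norm, dist_eq_norm, Real.coe_toNNReal _ (by linarith)]
      have h1 := R_lip hK p hR hPmem hPchar hx.1 hy.1
        (mem_closedBall_zero_iff.1 hx.2) (mem_closedBall_zero_iff.1 hy.2)
      rw [← hL₀] at h1
      linarith
    have hmem : w ∈ K ∩ closedBall (0:H) r :=
      ⟨hw, mem_closedBall_zero_iff.2 (by rw [hr]; linarith)⟩
    apply (hlip.continuousOn w hmem).mono_of_mem_nhdsWithin
    exact mem_nhdsWithin.2 ⟨ball (0:H) r, isOpen_ball,
      mem_ball_zero_iff.2 (by rw [hr]; linarith),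
      fun z hz => ⟨hz.2, ball_subset_closedBall hz.1⟩⟩
  have hcontF : Continuous (fun t => F (ψ t)) :=
    hFcontK.comp_continuous hψcont hψKall
  have hcontR : Continuous (fun t => R (ψ t)) :=
    hRcontK.comp_continuous hψcont hψKall
  -- φ as the integral of F ∘ ψ
  set φ : ℝ → ℝ := fun t => ∫ s in (0:ℝ)..t, F (ψ s) with hφdef
  have hφ0 : φ 0 = 0 := intervalIntegral.integral_same
  have hφd : ∀ t : ℝ, HasDerivAt φ (F (ψ t)) t := by
    intro t
    apply intervalIntegral.integral_hasDerivAt_right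
      (hcontF.intervalIntegrable 0 t)
      (hcontF.stronglyMeasurableAtFilter _ _)
      hcontF.continuousAt
  have hFψnn : ∀ t : ℝ, 0 ≤ t → 0 ≤ F (ψ t) := by
    intro t ht
    rw [hF (ψ t)]
    exact F_nonneg hK p (hψmem t ht)
  have hFψnn' : ∀ t : ℝ, 0 ≤ F (ψ (max t 0)) := fun t => hFψnn _ (le_max_right t 0)
  have hφnn : ∀ t : ℝ, 0 ≤ t → 0 ≤ φ t := by
    intro t ht
    apply intervalIntegral.integral_nonneg ht
    intro s hs
    exact hFψnn s hs.1
  refine ⟨φ, ψ, ⟨hφ0, hψ0, fun t ht => ⟨hφnn t ht, hψmem t ht⟩,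
    fun t ht => ⟨(hφd t).hasDerivWithinAt, hψd t ht⟩,
    hcontF.continuousOn, hcontR.continuousOn⟩, ?_⟩
  -- uniqueness
  rintro φ' ψ' ⟨hφ'0, hψ'0, hmem', hderiv', _hcF', _hcR'⟩
  have hψuniq : ∀ t : ℝ, 0 ≤ t → ψ' t = ψ t := by
    intro t ht
    have hc' : ContinuousOn ψ' (Icc 0 t) := fun s hs =>
      ((hderiv' s hs.1).2.continuousWithinAt).mono (fun z hz => hz.1)
    have hcψ : ContinuousOn ψ (Icc 0 t) := fun s hs =>
      (hψcontOn s hs.1).mono (fun z hz => hz.1)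
    have h := uniq_sol hK p hR hPmem hPchar (T := t) hc'
      (fun s hs => (hmem' s hs.1).2)
      (fun s hs => ((hderiv' s hs.1).2).mono (Ici_subset_Ici.2 hs.1))
      hcψ
      (fun s hs => hψmem s hs.1)
      (fun s hs => (hψd s hs.1).mono (Ici_subset_Ici.2 hs.1))
      (by rw [hψ'0, hψ0])
    exact h ⟨ht, le_rfl⟩
  intro t ht
  refine ⟨?_, hψuniq t ht⟩
  -- φ uniqueness on [0, t]
  have hder1 : ∀ x ∈ Ico (0:ℝ) t, HasDerivWithinAt φ' (F (ψ x)) (Ici x) x := by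
    intro x hx
    have h1 := (hderiv' x hx.1).1
    rw [hψuniq x hx.1] at h1
    exact h1.mono (Ici_subset_Ici.2 hx.1)
  have hder2 : ∀ x ∈ Ico (0:ℝ) t, HasDerivWithinAt φ (F (ψ x)) (Ici x) x := fun x _hx =>
    (hφd x).hasDerivWithinAt
  have hc1 : ContinuousOn φ' (Icc 0 t) := fun s hs =>
    ((hderiv' s hs.1).1.continuousWithinAt).mono (fun z hz => hz.1)
  have hc2 : ContinuousOn φ (Icc 0 t) := fun s _hs => (hφd s).continuousAt.continuousWithinAt
  have h := eq_of_has_deriv_right_eq hder1 hder2 hc1 hc2 (by rw [hφ'0, hφ0])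
  exact h t ⟨ht, le_rfl⟩
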